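/- There exists a nonzero polynomial g in 6 real variables such that for every b = (b11,b12,b13,b22,b23,b33) ∈ ℝ⁶ with g(b) ≠ 0, the homogenized slowness polynomial P̃_b = det(Γ_b − p₀²·I₂), viewed as an element of ℂ[p₀,p₁,p₂], is irreducible. -/

import Mathlib

open MvPolynomial Matrix

/-- The Christoffel matrix of a two-dimensional stiffness tensor with Voigt parameters
`b = (b11,b12,b13,b22,b23,b33)` (indexed `0,…,5`), with polynomial entries in `ℂ[p₀,p₁,p₂]`
(where `p₁ = X 1`, `p₂ = X 2`). -/
noncomputable def christoffel2 (b : Fin 6 → ℝ) :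
    Matrix (Fin 2) (Fin 2) (MvPolynomial (Fin 3) ℂ) :=
  !![C (b 0 : ℂ) * X 1 ^ 2 + C (2 * b 2 : ℂ) * X 1 * X 2 + C (b 5 : ℂ) * X 2 ^ 2,
     C (b 2 : ℂ) * X 1 ^ 2 + C (b 5 + b 1 : ℂ) * X 1 * X 2 + C (b 4 : ℂ) * X 2 ^ 2;
     C (b 2 : ℂ) * X 1 ^ 2 + C (b 5 + b 1 : ℂ) * X 1 * X 2 + C (b 4 : ℂ) * X 2 ^ 2,
     C (b 5 : ℂ) * X 1 ^ 2 + C (2 * b 4 : ℂ) * X 1 * X 2 + C (b 3 : ℂ) * X 2 ^ 2]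

/-- The homogenized slowness polynomial `det(Γ_b − p₀²·I₂) ∈ ℂ[p₀,p₁,p₂]`. -/
noncomputable def slownessHom2 (b : Fin 6 → ℝ) : MvPolynomial (Fin 3) ℂ :=
  (christoffel2 b - (X 0 ^ 2 : MvPolynomial (Fin 3) ℂ) • 1).det

/-! ### Auxiliary polynomial lemmas -/

section PolyAux
open Polynomial

lemma eq_quadratic_of_natDegree_le_two {R : Type*} [CommRing R] {v : Polynomial R}
    (h : v.natDegree ≤ 2) :
    v = Polynomial.C (v.coeff 2) * Polynomial.X ^ 2 + Polynomial.C (v.coeff 1) * Polynomial.X + Polynomial.C (v.coeff 0) := by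
  ext n
  rcases n with _ | _ | _ | n
  · simp
  · simp
  · simp
  · rw [Polynomial.coeff_eq_zero_of_natDegree_lt (lt_of_le_of_lt h (by omega))]
    simp [Polynomial.coeff_X_pow]

lemma quartic_coeffs_eq {R : Type*} [CommRing R] {a4 a3 a2 a1 a0 b4 b3 b2 b1 b0 : R}
    (h : (Polynomial.C a4 * Polynomial.X ^ 4 + Polynomial.C a3 * Polynomial.X ^ 3 + Polynomial.C a2 * Polynomial.X ^ 2 + Polynomial.C a1 * Polynomial.X + Polynomial.C a0 : Polynomial R)
       = Polynomial.C b4 * Polynomial.X ^ 4 + Polynomial.C b3 * Polynomial.X ^ 3 + Polynomial.C b2 * Polynomial.X ^ 2 + Polynomial.C b1 * Polynomial.X + Polynomial.C b0) :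
    a4 = b4 ∧ a3 = b3 ∧ a2 = b2 ∧ a1 = b1 ∧ a0 = b0 := by
  refine ⟨?_, ?_, ?_, ?_, ?_⟩
  · simpa using congrArg (fun p => Polynomial.coeff p 4) h
  · simpa using congrArg (fun p => Polynomial.coeff p 3) h
  · simpa using congrArg (fun p => Polynomial.coeff p 2) h
  · simpa using congrArg (fun p => Polynomial.coeff p 1) h
  · simpa using congrArg (fun p => Polynomial.coeff p 0) h

lemma expand_quad_sq {F : Type*} [CommRing F] (e2 e1 e0 : F) :
    ((Polynomial.C e2 * Polynomial.X ^ 2 + Polynomial.C e1 * Polynomial.X + Polynomial.C e0 : Polynomial F) * (Polynomial.C e2 * Polynomial.X ^ 2 + Polynomial.C e1 * Polynomial.X + Polynomial.C e0))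
      = Polynomial.C (e2 ^ 2) * Polynomial.X ^ 4 + Polynomial.C (2 * e2 * e1) * Polynomial.X ^ 3 + Polynomial.C (e1 ^ 2 + 2 * e2 * e0) * Polynomial.X ^ 2
        + Polynomial.C (2 * e1 * e0) * Polynomial.X + Polynomial.C (e0 ^ 2) := by
  simp only [_root_.map_mul, _root_.map_add, _root_.map_pow, _root_.map_ofNat]
  ring

/-- If an explicit quartic with nonvanishing leading coefficient is a square of a polynomial,
then the (first) square-variety equation `8c₄²c₁ - 4c₄c₃c₂ + c₃³ = 0` holds. -/
lemma quartic_square_G1 {F : Type*} [Field F] {c4 c3 c2 c1 c0 : F} {v : Polynomial F}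
    (h : (Polynomial.C c4 * Polynomial.X ^ 4 + Polynomial.C c3 * Polynomial.X ^ 3 + Polynomial.C c2 * Polynomial.X ^ 2 + Polynomial.C c1 * Polynomial.X + Polynomial.C c0 : Polynomial F) = v * v)
    (hc4 : c4 ≠ 0) : 8 * c4 ^ 2 * c1 - 4 * c4 * c3 * c2 + c3 ^ 3 = 0 := by
  set u : Polynomial F := Polynomial.C c4 * Polynomial.X ^ 4 + Polynomial.C c3 * Polynomial.X ^ 3 + Polynomial.C c2 * Polynomial.X ^ 2 + Polynomial.C c1 * Polynomial.X + Polynomial.C c0 with hu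
  have hcoeff4 : u.coeff 4 = c4 := by simp [hu, Polynomial.coeff_X_pow]
  have hu0 : u ≠ 0 := fun h0 => hc4 (by rw [← hcoeff4, h0]; simp)
  have hv0 : v ≠ 0 := by rintro rfl; rw [mul_zero] at h; exact hu0 h
  have hdegle : u.natDegree ≤ 4 := by
    apply Polynomial.natDegree_le_iff_coeff_eq_zero.mpr
    intro n hn
    rcases n with _ | _ | _ | _ | _ | n
    · omega
    · omega
    · omega
    · omega
    · omega
    · simp [hu, Polynomial.coeff_X_pow]
  have hdegge : 4 ≤ u.natDegree := Polynomial.le_natDegree_of_ne_zero (hcoeff4 ▸ hc4)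
  have hdeg : u.natDegree = 4 := le_antisymm hdegle hdegge
  have hvdeg : v.natDegree = 2 := by
    have := Polynomial.natDegree_mul hv0 hv0
    rw [← h, hdeg] at this
    omega
  have hv : v = Polynomial.C (v.coeff 2) * Polynomial.X ^ 2 + Polynomial.C (v.coeff 1) * Polynomial.X + Polynomial.C (v.coeff 0) :=
    eq_quadratic_of_natDegree_le_two hvdeg.le
  rw [hu, hv, expand_quad_sq] at h
  obtain ⟨h4, h3, h2, h1, h0⟩ := quartic_coeffs_eq h
  subst h4 h3 h2 h1 h0
  ring

lemma expand_quad_mul {F : Type*} [CommRing F] (a b a' b' : F) :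
    ((Polynomial.X ^ 2 + Polynomial.C a * Polynomial.X + Polynomial.C b : Polynomial F) * (Polynomial.X ^ 2 + Polynomial.C a' * Polynomial.X + Polynomial.C b'))
      = Polynomial.C 1 * Polynomial.X ^ 4 + Polynomial.C (a + a') * Polynomial.X ^ 3 + Polynomial.C (b + b' + a * a') * Polynomial.X ^ 2
        + Polynomial.C (a * b' + a' * b) * Polynomial.X + Polynomial.C (b * b') := by
  simp only [_root_.map_mul, _root_.map_add, _root_.map_one]
  ring

lemma quartic_as_Cform {F : Type*} [CommRing F] (t d : F) :
    (Polynomial.X ^ 4 - Polynomial.C t * Polynomial.X ^ 2 + Polynomial.C d : Polynomial F)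
      = Polynomial.C 1 * Polynomial.X ^ 4 + Polynomial.C 0 * Polynomial.X ^ 3 + Polynomial.C (-t) * Polynomial.X ^ 2 + Polynomial.C 0 * Polynomial.X + Polynomial.C d := by
  simp only [_root_.map_neg, _root_.map_zero, _root_.map_one]
  ring

/-- Key field-theoretic criterion: a biquadratic `X⁴ - tX² + d` is irreducible over a field
provided `t² - 4d` and `d` are both non-squares. -/
lemma biquadratic_irreducible {F : Type*} [Field F] {t d : F}
    (h1 : ¬ IsSquare (t ^ 2 - 4 * d)) (h2 : ¬ IsSquare d) :
    Irreducible (Polynomial.X ^ 4 - Polynomial.C t * Polynomial.X ^ 2 + Polynomial.C d : Polynomial F) := by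
  set p : Polynomial F := Polynomial.X ^ 4 - Polynomial.C t * Polynomial.X ^ 2 + Polynomial.C d with hp
  have hrearr : p = Polynomial.X ^ 4 + (-(Polynomial.C t * Polynomial.X ^ 2) + Polynomial.C d) := by rw [hp]; ring
  have hrest : degree (-(Polynomial.C t * Polynomial.X ^ 2) + Polynomial.C d : Polynomial F) < 4 := by
    apply lt_of_le_of_lt (degree_add_le _ _)
    rw [max_lt_iff]
    constructor
    · rw [degree_neg]
      apply lt_of_le_of_lt (degree_mul_le _ _)
      calc degree (Polynomial.C t) + degree (Polynomial.X ^ 2 : Polynomial F) ≤ 0 + 2 := by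
            rw [degree_X_pow]; exact add_le_add degree_C_le le_rfl
        _ < 4 := by decide
    · exact lt_of_le_of_lt degree_C_le (by decide)
  have hmonic : p.Monic := by rw [hrearr]; exact monic_X_pow_add hrest
  have hX4 : degree (Polynomial.X ^ 4 : Polynomial F) = 4 := degree_X_pow 4
  have hdegree : p.degree = 4 := by
    rw [hrearr, degree_add_eq_left_of_degree_lt (by rw [hX4]; exact hrest), hX4]
  have hdeg : p.natDegree = 4 := natDegree_eq_of_degree_eq_some hdegree
  have hpne : p ≠ 0 := hmonic.ne_zero
  by_contra hirr
  have hpnu : ¬ IsUnit p := by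
    intro hu
    rw [Polynomial.isUnit_iff_degree_eq_zero] at hu
    rw [hdegree] at hu
    exact absurd hu (by decide)
  rw [irreducible_iff] at hirr
  push_neg at hirr
  obtain ⟨q0, r0, hfac, hq0, hr0⟩ := hirr hpnu
  have hq0ne : q0 ≠ 0 := by rintro rfl; rw [zero_mul] at hfac; exact hpne hfac
  have hr0ne : r0 ≠ 0 := by rintro rfl; rw [mul_zero] at hfac; exact hpne hfac
  have hq0d : 1 ≤ q0.natDegree := by
    rcases Nat.eq_zero_or_pos q0.natDegree with h | h
    · obtain ⟨c, rfl⟩ := Polynomial.natDegree_eq_zero.mp h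
      exact absurd (isUnit_C.mpr (isUnit_iff_ne_zero.mpr (fun hc => hq0ne (by rw [hc, _root_.map_zero]))))
        hq0
    · exact h
  have hr0d : 1 ≤ r0.natDegree := by
    rcases Nat.eq_zero_or_pos r0.natDegree with h | h
    · obtain ⟨c, rfl⟩ := Polynomial.natDegree_eq_zero.mp h
      exact absurd (isUnit_C.mpr (isUnit_iff_ne_zero.mpr (fun hc => hr0ne (by rw [hc, _root_.map_zero]))))
        hr0
    · exact h
  have hsum : q0.natDegree + r0.natDegree = 4 := by
    rw [← natDegree_mul hq0ne hr0ne, ← hfac, hdeg]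
  obtain ⟨q, hqdvd, hqd⟩ : ∃ q : Polynomial F, q ∣ p ∧ (q.natDegree = 1 ∨ q.natDegree = 2) := by
    rcases le_or_gt q0.natDegree 2 with h | h
    · exact ⟨q0, ⟨⟨r0, hfac⟩, by omega⟩⟩
    · exact ⟨r0, ⟨⟨q0, by rw [hfac, mul_comm]⟩, by omega⟩⟩
  have hqne : q ≠ 0 := by rintro rfl; simp at hqd
  set q' : Polynomial F := q * Polynomial.C q.leadingCoeff⁻¹ with hq'
  have hq'monic : q'.Monic := monic_mul_leadingCoeff_inv hqne
  have hlc : q.leadingCoeff ≠ 0 := leadingCoeff_ne_zero.mpr hqne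
  have hq'dvd : q' ∣ p := by
    obtain ⟨s, hs⟩ := hqdvd
    refine ⟨Polynomial.C q.leadingCoeff * s, ?_⟩
    have : q' * (Polynomial.C q.leadingCoeff * s) = (Polynomial.C q.leadingCoeff⁻¹ * Polynomial.C q.leadingCoeff) * (q * s) := by
      rw [hq']; ring
    rw [this, ← Polynomial.C_mul, inv_mul_cancel₀ hlc, Polynomial.C_1, one_mul, ← hs]
  have hq'd : q'.natDegree = 1 ∨ q'.natDegree = 2 := by
    rw [hq', natDegree_mul_C (inv_ne_zero hlc)]
    exact hqd
  set r : Polynomial F := p /ₘ q' with hr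
  have hfac' : p = q' * r := by
    have := modByMonic_add_div p q'
    rw [(modByMonic_eq_zero_iff_dvd hq'monic).mpr hq'dvd, zero_add] at this
    exact this.symm
  have hrmonic : r.Monic := hq'monic.of_mul_monic_left (hfac' ▸ hmonic)
  have hrd : q'.natDegree + r.natDegree = 4 := by
    rw [← natDegree_mul hq'monic.ne_zero hrmonic.ne_zero, ← hfac', hdeg]
  rcases hq'd with h1d | h2d
  · -- linear factor: gives a root, hence t² - 4d is a square
    have hqX : q' = Polynomial.X + Polynomial.C (q'.coeff 0) := hq'monic.eq_X_add_C h1d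
    set z : F := -(q'.coeff 0) with hz
    have hroot : p.eval z = 0 := by
      rw [hfac', Polynomial.eval_mul, hqX]
      simp [hz]
    rw [hp] at hroot
    simp only [Polynomial.eval_add, Polynomial.eval_sub, Polynomial.eval_pow, Polynomial.eval_mul, Polynomial.eval_C, Polynomial.eval_X] at hroot
    exact h1 ⟨2 * z ^ 2 - t, by linear_combination (-4 : F) * hroot⟩
  · -- quadratic factor
    have hrd2 : r.natDegree = 2 := by omega
    have hqform : q' = Polynomial.X ^ 2 + Polynomial.C (q'.coeff 1) * Polynomial.X + Polynomial.C (q'.coeff 0) := by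
      have := eq_quadratic_of_natDegree_le_two h2d.le
      rwa [show q'.coeff 2 = 1 from (h2d ▸ hq'monic.coeff_natDegree), _root_.map_one, one_mul] at this
    have hrform : r = Polynomial.X ^ 2 + Polynomial.C (r.coeff 1) * Polynomial.X + Polynomial.C (r.coeff 0) := by
      have := eq_quadratic_of_natDegree_le_two hrd2.le
      rwa [show r.coeff 2 = 1 from (hrd2 ▸ hrmonic.coeff_natDegree), _root_.map_one, one_mul] at this
    set a := q'.coeff 1; set b := q'.coeff 0
    set a' := r.coeff 1; set b' := r.coeff 0
    have hexp : (Polynomial.C 1 * Polynomial.X ^ 4 + Polynomial.C 0 * Polynomial.X ^ 3 + Polynomial.C (-t) * Polynomial.X ^ 2 + Polynomial.C 0 * Polynomial.X + Polynomial.C d : Polynomial F)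
        = Polynomial.C 1 * Polynomial.X ^ 4 + Polynomial.C (a + a') * Polynomial.X ^ 3 + Polynomial.C (b + b' + a * a') * Polynomial.X ^ 2
          + Polynomial.C (a * b' + a' * b) * Polynomial.X + Polynomial.C (b * b') := by
      rw [← quartic_as_Cform, ← expand_quad_mul, ← hqform, ← hrform, ← hfac']
    obtain ⟨-, e3, e2, e1, e0⟩ := quartic_coeffs_eq hexp
    have ha' : a' = -a := by linear_combination -e3
    rw [ha'] at e2 e1
    have hkey : a * (b' - b) = 0 := by linear_combination -e1
    rcases mul_eq_zero.mp hkey with ha | hbb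
    · rw [ha] at e2
      exact h1 ⟨b - b', by linear_combination (b + b' - t) * e2 - 4 * e0⟩
    · rw [sub_eq_zero.mp hbb] at e0
      exact h2 ⟨b, e0⟩

/-- In an integrally closed domain, an element which becomes a square in the fraction field is
already a square. -/
lemma isSquare_of_isSquare_fractionMap {B : Type*} [CommRing B] [IsDomain B] [IsIntegrallyClosed B]
    {K : Type*} [Field K] [Algebra B K] [IsFractionRing B K] {u : B}
    (h : IsSquare (algebraMap B K u)) : IsSquare u := by
  obtain ⟨z, hz⟩ := h
  have hint : IsIntegral B z := by
    refine ⟨Polynomial.X ^ 2 - Polynomial.C u, Polynomial.monic_X_pow_sub_C u (by norm_num), ?_⟩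
    simp [Polynomial.eval₂_sub, Polynomial.eval₂_pow, ← hz, sq]
  obtain ⟨w, hw⟩ := IsIntegrallyClosed.isIntegral_iff.mp hint
  refine ⟨w, IsFractionRing.injective B K ?_⟩
  rw [_root_.map_mul, hw, ← hz]

end PolyAux

/-! ### The trace and determinant polynomials in two variables -/

/-- Trace of the Christoffel matrix, after the substitution `p₁ ↦ X 0`, `p₂ ↦ X 1`. -/
noncomputable def Tb (b : Fin 6 → ℝ) : MvPolynomial (Fin 2) ℂ :=
  C ((b 0 : ℂ) + b 5) * X 0 ^ 2 + C (2 * ((b 2 : ℂ) + b 4)) * X 0 * X 1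
    + C ((b 3 : ℂ) + b 5) * X 1 ^ 2

/-- Determinant of the Christoffel matrix, after the substitution `p₁ ↦ X 0`, `p₂ ↦ X 1`. -/
noncomputable def Db (b : Fin 6 → ℝ) : MvPolynomial (Fin 2) ℂ :=
  C ((b 0 : ℂ) * b 5 - (b 2 : ℂ) ^ 2) * X 0 ^ 4
    + C (2 * ((b 0 : ℂ) * b 4 - (b 1 : ℂ) * b 2)) * X 0 ^ 3 * X 1
    + C ((b 0 : ℂ) * b 3 + 2 * (b 2 : ℂ) * b 4 + (b 5 : ℂ) ^ 2 - ((b 5 : ℂ) + b 1) ^ 2)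
        * X 0 ^ 2 * X 1 ^ 2
    + C (2 * ((b 2 : ℂ) * b 3 - (b 1 : ℂ) * b 4)) * X 0 * X 1 ^ 3
    + C ((b 3 : ℂ) * b 5 - (b 4 : ℂ) ^ 2) * X 1 ^ 4

/-- Discriminant-type polynomial `T² - 4D`. -/
noncomputable def Eb (b : Fin 6 → ℝ) : MvPolynomial (Fin 2) ℂ := Tb b ^ 2 - 4 * Db b

lemma finSuccEquiv_slowness (b : Fin 6 → ℝ) :
    (MvPolynomial.finSuccEquiv ℂ 2) (slownessHom2 b)
      = Polynomial.X ^ 4 - Polynomial.C (Tb b) * Polynomial.X ^ 2 + Polynomial.C (Db b) := by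
  have hX1 : (X 1 : MvPolynomial (Fin 3) ℂ) = X (Fin.succ 0) := rfl
  have hX2 : (X 2 : MvPolynomial (Fin 3) ℂ) = X (Fin.succ 1) := rfl
  rw [slownessHom2, Matrix.det_fin_two]
  simp only [Matrix.sub_apply, Matrix.smul_apply, Matrix.one_apply, christoffel2,
    Matrix.cons_val', Matrix.cons_val_zero, Matrix.cons_val_one, Matrix.head_cons,
    Matrix.head_fin_const, Matrix.empty_val', Matrix.cons_val_fin_one, Matrix.of_apply,
    smul_eq_mul, mul_one, if_true, if_false]
  rw [hX1, hX2]
  have hC : ∀ c : ℂ, (MvPolynomial.finSuccEquiv ℂ 2) (C c) = Polynomial.C (C c) := fun c => by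
    simp [MvPolynomial.finSuccEquiv_apply]
  have h1' : (MvPolynomial.finSuccEquiv ℂ 2) (X 1) = Polynomial.C (X 0) :=
    MvPolynomial.finSuccEquiv_X_succ (j := 0)
  have h2' : (MvPolynomial.finSuccEquiv ℂ 2) (X 2) = Polynomial.C (X 1) :=
    MvPolynomial.finSuccEquiv_X_succ (j := 1)
  push_cast
  simp only [_root_.map_sub, _root_.map_add, _root_.map_mul, _root_.map_pow, _root_.map_ofNat,
    _root_.map_zero, _root_.map_one,
    MvPolynomial.finSuccEquiv_X_zero, MvPolynomial.finSuccEquiv_X_succ, hC, h1', h2', Tb, Db]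
  ring

/-! ### Real coefficient functions and the generic polynomial `g` -/

namespace Generic2D

/-- coefficients of `D(x,1)` -/
def rd4 (b : Fin 6 → ℝ) : ℝ := b 0 * b 5 - b 2 ^ 2
def rd3 (b : Fin 6 → ℝ) : ℝ := 2 * (b 0 * b 4 - b 1 * b 2)
def rd2 (b : Fin 6 → ℝ) : ℝ := b 0 * b 3 + 2 * b 2 * b 4 + b 5 ^ 2 - (b 5 + b 1) ^ 2
def rd1 (b : Fin 6 → ℝ) : ℝ := 2 * (b 2 * b 3 - b 1 * b 4)
def rd0 (b : Fin 6 → ℝ) : ℝ := b 3 * b 5 - b 4 ^ 2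
/-- coefficients of `T(x,1)` -/
def rt2 (b : Fin 6 → ℝ) : ℝ := b 0 + b 5
def rt1 (b : Fin 6 → ℝ) : ℝ := 2 * (b 2 + b 4)
def rt0 (b : Fin 6 → ℝ) : ℝ := b 3 + b 5
/-- coefficients of `E(x,1) = T(x,1)² - 4D(x,1)` -/
def re4 (b : Fin 6 → ℝ) : ℝ := rt2 b ^ 2 - 4 * rd4 b
def re3 (b : Fin 6 → ℝ) : ℝ := 2 * rt2 b * rt1 b - 4 * rd3 b
def re2 (b : Fin 6 → ℝ) : ℝ := rt1 b ^ 2 + 2 * rt2 b * rt0 b - 4 * rd2 b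
def re1 (b : Fin 6 → ℝ) : ℝ := 2 * rt1 b * rt0 b - 4 * rd1 b
def re0 (b : Fin 6 → ℝ) : ℝ := rt0 b ^ 2 - 4 * rd0 b
/-- obstructions to being a square -/
def G1d (b : Fin 6 → ℝ) : ℝ := 8 * rd4 b ^ 2 * rd1 b - 4 * rd4 b * rd3 b * rd2 b + rd3 b ^ 3
def G1e (b : Fin 6 → ℝ) : ℝ := 8 * re4 b ^ 2 * re1 b - 4 * re4 b * re3 b * re2 b + re3 b ^ 3

end Generic2D

open Generic2D

/-- the generic-condition polynomial in the Voigt variables -/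
noncomputable def gGen : MvPolynomial (Fin 6) ℝ :=
  let x : Fin 6 → MvPolynomial (Fin 6) ℝ := fun i => X i
  let pd4 := x 0 * x 5 - x 2 ^ 2
  let pd3 := 2 * (x 0 * x 4 - x 1 * x 2)
  let pd2 := x 0 * x 3 + 2 * x 2 * x 4 + x 5 ^ 2 - (x 5 + x 1) ^ 2
  let pd1 := 2 * (x 2 * x 3 - x 1 * x 4)
  let pd0 := x 3 * x 5 - x 4 ^ 2
  let pt2 := x 0 + x 5
  let pt1 := 2 * (x 2 + x 4)
  let pt0 := x 3 + x 5
  let pe4 := pt2 ^ 2 - 4 * pd4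
  let pe3 := 2 * pt2 * pt1 - 4 * pd3
  let pe2 := pt1 ^ 2 + 2 * pt2 * pt0 - 4 * pd2
  let pe1 := 2 * pt1 * pt0 - 4 * pd1
  let pG1d := 8 * pd4 ^ 2 * pd1 - 4 * pd4 * pd3 * pd2 + pd3 ^ 3
  let pG1e := 8 * pe4 ^ 2 * pe1 - 4 * pe4 * pe3 * pe2 + pe3 ^ 3
  pd4 * pe4 * pG1d * pG1e

lemma eval_gGen (b : Fin 6 → ℝ) :
    eval b gGen = rd4 b * re4 b * G1d b * G1e b := by
  simp only [gGen, _root_.map_mul, _root_.map_sub, _root_.map_add, _root_.map_pow, _root_.map_ofNat, MvPolynomial.eval_X]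
  simp only [rd4, rd3, rd2, rd1, rd0, rt2, rt1, rt0, re4, re3, re2, re1, re0, G1d, G1e]

/-! ### Evaluation at `p₂ = 1` -/

/-- The substitution `X 0 ↦ X`, `X 1 ↦ 1` into univariate polynomials. -/
noncomputable def ev1 : MvPolynomial (Fin 2) ℂ →ₐ[ℂ] Polynomial ℂ :=
  aeval ![Polynomial.X, 1]

lemma ev1_Db (b : Fin 6 → ℝ) :
    ev1 (Db b) = Polynomial.C (rd4 b : ℂ) * Polynomial.X ^ 4
      + Polynomial.C (rd3 b : ℂ) * Polynomial.X ^ 3 + Polynomial.C (rd2 b : ℂ) * Polynomial.X ^ 2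
      + Polynomial.C (rd1 b : ℂ) * Polynomial.X + Polynomial.C (rd0 b : ℂ) := by
  simp only [ev1, Db, _root_.map_add, _root_.map_mul, _root_.map_pow, aeval_C, aeval_X,
    Matrix.cons_val_zero, Matrix.cons_val_one, Matrix.head_cons, Polynomial.algebraMap_eq]
  simp only [rd4, rd3, rd2, rd1, rd0]
  push_cast
  simp only [_root_.map_add, _root_.map_sub, _root_.map_mul, _root_.map_pow, _root_.map_ofNat]
  ring

lemma ev1_Eb (b : Fin 6 → ℝ) :
    ev1 (Eb b) = Polynomial.C (re4 b : ℂ) * Polynomial.X ^ 4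
      + Polynomial.C (re3 b : ℂ) * Polynomial.X ^ 3 + Polynomial.C (re2 b : ℂ) * Polynomial.X ^ 2
      + Polynomial.C (re1 b : ℂ) * Polynomial.X + Polynomial.C (re0 b : ℂ) := by
  simp only [ev1, Eb, Tb, Db, _root_.map_add, _root_.map_mul, _root_.map_pow, _root_.map_sub,
    _root_.map_ofNat, aeval_C, aeval_X,
    Matrix.cons_val_zero, Matrix.cons_val_one, Matrix.head_cons, Polynomial.algebraMap_eq]
  simp only [re4, re3, re2, re1, re0, rt2, rt1, rt0, rd4, rd3, rd2, rd1, rd0]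
  push_cast
  simp only [_root_.map_add, _root_.map_sub, _root_.map_mul, _root_.map_pow, _root_.map_ofNat]
  ring

/-- A quartic element of `MvPolynomial (Fin 2) ℂ` whose dehomogenization satisfies `G1 ≠ 0`
is not a square. -/
lemma not_isSquare_of_quartic (u : MvPolynomial (Fin 2) ℂ) (c4 c3 c2 c1 c0 : ℝ)
    (hev : ev1 u = Polynomial.C (c4 : ℂ) * Polynomial.X ^ 4
      + Polynomial.C (c3 : ℂ) * Polynomial.X ^ 3 + Polynomial.C (c2 : ℂ) * Polynomial.X ^ 2
      + Polynomial.C (c1 : ℂ) * Polynomial.X + Polynomial.C (c0 : ℂ))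
    (hc4 : c4 ≠ 0) (hG1 : 8 * c4 ^ 2 * c1 - 4 * c4 * c3 * c2 + c3 ^ 3 ≠ 0) :
    ¬ IsSquare u := by
  rintro ⟨w, hw⟩
  have h : (Polynomial.C (c4 : ℂ) * Polynomial.X ^ 4
      + Polynomial.C (c3 : ℂ) * Polynomial.X ^ 3 + Polynomial.C (c2 : ℂ) * Polynomial.X ^ 2
      + Polynomial.C (c1 : ℂ) * Polynomial.X + Polynomial.C (c0 : ℂ)) = ev1 w * ev1 w := by
    rw [← hev, hw, _root_.map_mul]
  have hzero := quartic_square_G1 h (Complex.ofReal_ne_zero.mpr hc4)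
  apply hG1
  have : ((8 * c4 ^ 2 * c1 - 4 * c4 * c3 * c2 + c3 ^ 3 : ℝ) : ℂ) = 0 := by
    push_cast
    linear_combination hzero
  exact_mod_cast this

/-- For generic `b ∈ ℝ⁶`, the homogenized two-dimensional slowness polynomial
is irreducible over `ℂ`. -/
theorem generic_irreducibility_2D :
    ∃ g : MvPolynomial (Fin 6) ℝ, g ≠ 0 ∧
      ∀ b : Fin 6 → ℝ, eval b g ≠ 0 → Irreducible (slownessHom2 b) := by
  refine ⟨gGen, ?_, ?_⟩
  · -- gGen is nonzero: it does not vanish at b* = (1,0,1,2,1,3)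
    intro h
    have h0 := eval_gGen ![1, 0, 1, 2, 1, 3]
    rw [h] at h0
    simp only [map_zero] at h0
    norm_num [rd4, rd3, rd2, rd1, rd0, rt2, rt1, rt0, re4, re3, re2, re1, re0, G1d, G1e,
      show (![(1:ℝ), 0, 1, 2, 1, 3]) 5 = 3 from rfl, show (![(1:ℝ), 0, 1, 2, 1, 3]) 4 = 1 from rfl,
      show (![(1:ℝ), 0, 1, 2, 1, 3]) 3 = 2 from rfl, show (![(1:ℝ), 0, 1, 2, 1, 3]) 2 = 1 from rfl,
      show (![(1:ℝ), 0, 1, 2, 1, 3]) 1 = 0 from rfl, show (![(1:ℝ), 0, 1, 2, 1, 3]) 0 = 1 from rfl]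
      at h0
  · intro b hb
    rw [eval_gGen] at hb
    have h4 : rd4 b ≠ 0 := fun h => hb (by rw [h]; ring)
    have he4 : re4 b ≠ 0 := fun h => hb (by rw [h]; ring)
    have hg1d : G1d b ≠ 0 := fun h => hb (by rw [h]; ring)
    have hg1e : G1e b ≠ 0 := fun h => hb (by rw [h]; ring)
    -- the two non-square facts over MvPolynomial (Fin 2) ℂ
    have hDns : ¬ IsSquare (Db b) :=
      not_isSquare_of_quartic _ _ _ _ _ _ (ev1_Db b) h4 (by simpa [G1d] using hg1d)
    have hEns : ¬ IsSquare (Eb b) :=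
      not_isSquare_of_quartic _ _ _ _ _ _ (ev1_Eb b) he4 (by simpa [G1e] using hg1e)
    -- transfer irreducibility through finSuccEquiv
    rw [← MulEquiv.irreducible_iff (MvPolynomial.finSuccEquiv ℂ 2), finSuccEquiv_slowness b]
    -- Gauss lemma over the fraction field
    set K := FractionRing (MvPolynomial (Fin 2) ℂ)
    have hmonic : (Polynomial.X ^ 4 - Polynomial.C (Tb b) * Polynomial.X ^ 2
        + Polynomial.C (Db b)).Monic := by
      have hrest : Polynomial.degree (-(Polynomial.C (Tb b) * Polynomial.X ^ 2)
          + Polynomial.C (Db b)) < 4 := by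
        apply lt_of_le_of_lt (Polynomial.degree_add_le _ _)
        rw [max_lt_iff]
        constructor
        · rw [Polynomial.degree_neg]
          apply lt_of_le_of_lt (Polynomial.degree_mul_le _ _)
          calc Polynomial.degree (Polynomial.C (Tb b))
                + Polynomial.degree (Polynomial.X ^ 2 : Polynomial (MvPolynomial (Fin 2) ℂ))
              ≤ 0 + 2 := by
                rw [Polynomial.degree_X_pow]
                exact add_le_add Polynomial.degree_C_le le_rfl
            _ < 4 := by decide
        · exact lt_of_le_of_lt Polynomial.degree_C_le (by decide)
      have : (Polynomial.X ^ 4 - Polynomial.C (Tb b) * Polynomial.X ^ 2 + Polynomial.C (Db b)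
          : Polynomial (MvPolynomial (Fin 2) ℂ))
          = Polynomial.X ^ 4 + (-(Polynomial.C (Tb b) * Polynomial.X ^ 2)
            + Polynomial.C (Db b)) := by ring
      rw [this]
      exact Polynomial.monic_X_pow_add hrest
    rw [hmonic.irreducible_iff_irreducible_map_fraction_map (K := K)]
    simp only [Polynomial.map_add, Polynomial.map_sub, Polynomial.map_pow, Polynomial.map_mul,
      Polynomial.map_X, Polynomial.map_C]
    apply biquadratic_irreducible
    · intro hs
      apply hEns
      apply isSquare_of_isSquare_fractionMap (K := K)
      have : (algebraMap (MvPolynomial (Fin 2) ℂ) K) (Tb b) ^ 2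
          - 4 * (algebraMap (MvPolynomial (Fin 2) ℂ) K) (Db b)
          = algebraMap (MvPolynomial (Fin 2) ℂ) K (Eb b) := by
        rw [Eb, _root_.map_sub, _root_.map_pow, _root_.map_mul, _root_.map_ofNat]
      rwa [this] at hs
    · intro hs
      exact hDns (isSquare_of_isSquare_fractionMap (K := K) hs)
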